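/- For every prime p there is a unique monoid isomorphism τ_p : MR(Z_p) → MR(F_p[[t]]) such that for every integer m ≥ 0 and every unit u ∈ Z_p^×, τ_p(mres(u p^m)) = mres((u mod p) t^m), and τ_p is compatible with the natural maps to the residue field F_p. -/

import Mathlib

open IsLocalRing

variable (A : Type*) [CommRing A] [IsLocalRing A]

/-- `z ~ z'` iff `z' ∈ z·(1 + m)`, where `m` is the maximal ideal. -/
def mrel : A → A → Prop := fun z z' => ∃ u ∈ maximalIdeal A, z' = z * (1 + u)
/-- The set of multiplicative residues `MR(A) = A/(1+m)`. -/
def MR : Type _ := Quot (mrel A)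

variable {A}

/-- The multiplicative residue of an element of `A`. -/
def mres (a : A) : MR A := Quot.mk _ a

lemma mrel_refl (a : A) : mrel A a a := ⟨0, zero_mem _, by ring⟩

lemma mrel_mul {z z' w w' : A} (h1 : mrel A z z') (h2 : mrel A w w') :
    mrel A (z * w) (z' * w') := by
  obtain ⟨u, hu, rfl⟩ := h1
  obtain ⟨v, hv, rfl⟩ := h2
  exact ⟨u + v + u * v, add_mem (add_mem hu hv) (Ideal.mul_mem_right _ _ hu), by ring⟩

/-- The commutative monoid structure on `MR(A)` induced by multiplication on `A`. -/
noncomputable instance : CommMonoid (MR A) where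
  mul := Quot.map₂ (· * ·) (fun _ _ _ h => mrel_mul (mrel_refl _) h)
    (fun _ _ _ h => mrel_mul h (mrel_refl _))
  one := mres (1 : A)
  mul_assoc := by rintro ⟨a⟩ ⟨b⟩ ⟨c⟩; exact congrArg (Quot.mk _) (mul_assoc a b c)
  one_mul := by rintro ⟨a⟩; exact congrArg (Quot.mk _) (one_mul a)
  mul_one := by rintro ⟨a⟩; exact congrArg (Quot.mk _) (mul_one a)
  mul_comm := by rintro ⟨a⟩ ⟨b⟩; exact congrArg (Quot.mk _) (mul_comm a b)

/-- The natural multiplicative map `s_A : MR(A) → A/m`. -/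
noncomputable def sA : MR A → A ⧸ maximalIdeal A :=
  Quot.lift (residue A) (by
    rintro a b ⟨u, hu, rfl⟩
    have h0 : residue A u = 0 := Ideal.Quotient.eq_zero_iff_mem.mpr hu
    simp [map_mul, map_add, h0] <;> rfl)

lemma isUnit_one_add' {u : A} (hu : u ∈ maximalIdeal A) : IsUnit (1 + u) := by
  by_contra h
  have h2 : (1 : A) + u ∈ maximalIdeal A := h
  have h1 : (1 : A) ∈ maximalIdeal A := by simpa using sub_mem h2 hu
  exact (Ideal.ne_top_iff_one _).mp (maximalIdeal.isMaximal A).ne_top h1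

lemma mrel_symm' {a b : A} (h : mrel A a b) : mrel A b a := by
  obtain ⟨u, hu, rfl⟩ := h
  obtain ⟨v, hv⟩ := isUnit_one_add' hu
  have hinv : (↑v⁻¹ : A) * (1 + u) = 1 := by rw [← hv]; exact v.inv_mul
  have hmul : ((1 : A) + u) * ↑v⁻¹ = 1 := by rw [← hv]; exact v.mul_inv
  refine ⟨(↑v⁻¹ : A) - 1, ?_, ?_⟩
  · have heq : (↑v⁻¹ : A) - 1 = -(u * ↑v⁻¹) := by linear_combination hinv
    rw [heq]
    exact neg_mem (Ideal.mul_mem_right _ _ hu)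
  · linear_combination (-(a : A)) * hmul

lemma mrel_trans' {a b c : A} (h1 : mrel A a b) (h2 : mrel A b c) : mrel A a c := by
  obtain ⟨u, hu, rfl⟩ := h1
  obtain ⟨v, hv, rfl⟩ := h2
  exact ⟨u + v + u * v, add_mem (add_mem hu hv) (Ideal.mul_mem_right _ _ hu), by ring⟩

lemma mrel_equivalence : Equivalence (mrel A) :=
  ⟨mrel_refl, mrel_symm', mrel_trans'⟩

lemma mres_eq_iff {a b : A} : mres a = mres b ↔ mrel A a b := by
  change @Eq (Quot (mrel A)) (Quot.mk _ a) (Quot.mk _ b) ↔ _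
  rw [Quot.eq]
  exact ⟨fun h => (mrel_equivalence.eqvGen_iff).mp h, Relation.EqvGen.rel _ _⟩

lemma mres_eq_zero_iff {a : A} : mres a = mres (0 : A) ↔ a = 0 := by
  rw [mres_eq_iff]
  constructor
  · rintro ⟨u, hu, h⟩
    obtain ⟨v, hv⟩ := isUnit_one_add' hu
    calc a = a * (↑v * ↑v⁻¹) := by rw [v.mul_inv, mul_one]
    _ = (a * (1 + u)) * ↑v⁻¹ := by rw [hv]; ring
    _ = 0 := by rw [← h, zero_mul]
  · rintro rfl; exact mrel_refl 0

lemma mres_mul (a b : A) : mres a * mres b = mres (a * b) := rfl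

lemma mres_one : (1 : MR A) = mres (1 : A) := rfl

section Padic

open PowerSeries PadicInt

variable (p : ℕ) [Fact p.Prime]

lemma mem_maxIdeal_zp_iff {x : ℤ_[p]} :
    x ∈ maximalIdeal ℤ_[p] ↔ PadicInt.toZMod x = 0 := by
  rw [← PadicInt.ker_toZMod, RingHom.mem_ker]

lemma mem_maxIdeal_ps_iff {f : PowerSeries (ZMod p)} :
    f ∈ maximalIdeal (PowerSeries (ZMod p)) ↔ constantCoeff f = 0 := by
  rw [PowerSeries.maximalIdeal_eq_span_X, Ideal.mem_span_singleton, PowerSeries.X_dvd_iff]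

lemma p_ne_zero : (p : ℤ_[p]) ≠ 0 :=
  Nat.cast_ne_zero.mpr (Fact.out : p.Prime).ne_zero

lemma val_isUnit_mul {v : ℤ_[p]} (hv : IsUnit v) (m : ℕ) :
    ((v * (p : ℤ_[p]) ^ m).valuation) = m := by
  have hnorm : ‖v‖ = 1 := PadicInt.isUnit_iff.mp hv
  have hv0 : v ≠ 0 := hv.ne_zero
  have hval : v.valuation = 0 := by
    have h1 : (p : ℝ) ^ (-(v.valuation : ℤ)) = (p : ℝ) ^ (0 : ℤ) := by
      rw [← PadicInt.norm_eq_zpow_neg_valuation hv0, hnorm, zpow_zero]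
    have hp1 : (1 : ℝ) < p := by exact_mod_cast (Fact.out : p.Prime).one_lt
    have := zpow_right_injective₀ (by positivity) (ne_of_gt hp1) h1
    simpa using this
  rw [mul_comm, PadicInt.valuation_p_pow_mul _ _ hv0, hval, add_zero]

lemma zp_char (u u' : ℤ_[p]ˣ) (m n : ℕ)
    (h : mres ((u : ℤ_[p]) * (p : ℤ_[p]) ^ m) = mres ((u' : ℤ_[p]) * (p : ℤ_[p]) ^ n)) :
    PadicInt.toZMod (u : ℤ_[p]) = PadicInt.toZMod (u' : ℤ_[p]) ∧ m = n := by
  rw [mres_eq_iff] at h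
  obtain ⟨x, hx, h⟩ := h
  have hux : IsUnit ((u : ℤ_[p]) * (1 + x)) := u.isUnit.mul (isUnit_one_add' hx)
  have hmn : m = n := by
    have h1 : ((u : ℤ_[p]) * (1 + x) * (p : ℤ_[p]) ^ m).valuation
        = ((u' : ℤ_[p]) * (p : ℤ_[p]) ^ n).valuation := by
      rw [show (↑u : ℤ_[p]) * (1 + x) * (p : ℤ_[p]) ^ m
          = (↑u : ℤ_[p]) * (p : ℤ_[p]) ^ m * (1 + x) by ring, ← h]
    rw [val_isUnit_mul p hux, val_isUnit_mul p u'.isUnit] at h1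
    exact_mod_cast h1
  subst hmn
  refine ⟨?_, rfl⟩
  have h2 : ((u' : ℤ_[p])) * (p : ℤ_[p]) ^ m = ((u : ℤ_[p]) * (1 + x)) * (p : ℤ_[p]) ^ m := by
    linear_combination h
  have h3 := mul_right_cancel₀ (pow_ne_zero m (p_ne_zero p)) h2
  have hx0 : PadicInt.toZMod x = 0 := (mem_maxIdeal_zp_iff p).mp hx
  have := congrArg PadicInt.toZMod h3
  rw [map_mul, map_add, map_one, hx0, add_zero, mul_one] at this
  exact this.symm

lemma zp_char_rev (u u' : ℤ_[p]ˣ) (m : ℕ)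
    (h : PadicInt.toZMod (u : ℤ_[p]) = PadicInt.toZMod (u' : ℤ_[p])) :
    mres ((u : ℤ_[p]) * (p : ℤ_[p]) ^ m) = mres ((u' : ℤ_[p]) * (p : ℤ_[p]) ^ m) := by
  rw [mres_eq_iff]
  refine ⟨(↑u⁻¹ : ℤ_[p]) * (↑u' : ℤ_[p]) - 1, ?_, ?_⟩
  · rw [mem_maxIdeal_zp_iff]
    have h1 : PadicInt.toZMod ((↑u⁻¹ : ℤ_[p]) * (↑u : ℤ_[p])) = 1 := by
      rw [Units.inv_mul, map_one]
    rw [map_sub, map_mul, ← h, map_one]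
    rw [map_mul] at h1
    linear_combination h1
  · have huu : (↑u : ℤ_[p]) * (↑u⁻¹ : ℤ_[p]) = 1 := Units.mul_inv u
    linear_combination (-((p : ℤ_[p]) ^ m) * (↑u' : ℤ_[p])) * huu

end Padic

section PS

open PowerSeries PadicInt

variable (p : ℕ) [Fact p.Prime]

lemma CX_ne_zero {c : ZMod p} (hc : c ≠ 0) (m : ℕ) :
    PowerSeries.C c * PowerSeries.X ^ m ≠ 0 := by
  apply mul_ne_zero
  · exact fun hCc => hc (by simpa using congrArg (constantCoeff) hCc)
  · exact pow_ne_zero _ PowerSeries.X_ne_zero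

lemma order_CX {c : ZMod p} (hc : c ≠ 0) (m : ℕ) :
    (PowerSeries.C c * PowerSeries.X ^ m).order = (m : ℕ∞) := by
  rw [PowerSeries.order_mul, PowerSeries.order_X_pow,
    PowerSeries.order_zero_of_unit ((isUnit_iff_ne_zero.mpr hc).map PowerSeries.C),
    zero_add]

lemma ps_classify {f : PowerSeries (ZMod p)} (hf : f ≠ 0) :
    mres f = mres (PowerSeries.C ((PowerSeries.firstUnitCoeff hf : (ZMod p)ˣ) : ZMod p) *
      PowerSeries.X ^ (f.order.lift (PowerSeries.order_finite_iff_ne_zero.mpr hf))) := by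
  set m := f.order.lift (PowerSeries.order_finite_iff_ne_zero.mpr hf) with hm
  set g := PowerSeries.divXPowOrder f with hg
  set c := PowerSeries.firstUnitCoeff hf with hcdef
  have hc : constantCoeff g = ↑c := rfl
  have hspec : PowerSeries.X ^ m * g = f := by
    rw [hm, ENat.lift_eq_toNat_of_lt_top]
    exact PowerSeries.X_pow_order_mul_divXPowOrder
  have key : PowerSeries.C (↑c : ZMod p) * PowerSeries.C (↑c⁻¹ : ZMod p) = 1 := by
    have hk : (↑c : ZMod p) * ↑c⁻¹ = 1 := c.mul_inv
    rw [← map_mul, hk, map_one]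
  refine (mres_eq_iff.mpr ?_).symm
  refine ⟨PowerSeries.C (↑c⁻¹ : ZMod p) * g - 1, ?_, ?_⟩
  · rw [mem_maxIdeal_ps_iff]
    have hik : (↑c⁻¹ : ZMod p) * ↑c = 1 := c.inv_mul
    rw [map_sub, map_mul, PowerSeries.constantCoeff_C, hc, hik, map_one, sub_self]
  · calc f = (PowerSeries.C (↑c : ZMod p) * PowerSeries.C (↑c⁻¹ : ZMod p)) *
        (PowerSeries.X ^ m * g) := by rw [key, hspec, one_mul]
    _ = PowerSeries.C (↑c : ZMod p) * PowerSeries.X ^ m *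
        (1 + (PowerSeries.C (↑c⁻¹ : ZMod p) * g - 1)) := by ring

lemma ps_char {c c' : ZMod p} (hc : c ≠ 0) (hc' : c' ≠ 0) (m n : ℕ)
    (h : mres (PowerSeries.C c * PowerSeries.X ^ m) =
      mres (PowerSeries.C c' * PowerSeries.X ^ n)) :
    c = c' ∧ m = n := by
  rw [mres_eq_iff] at h
  obtain ⟨x, hx, h⟩ := h
  have hx0 : constantCoeff x = 0 := (mem_maxIdeal_ps_iff p).mp hx
  have hunit : IsUnit ((1 : PowerSeries (ZMod p)) + x) := by
    rw [PowerSeries.isUnit_iff_constantCoeff]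
    simp [hx0]
  have hmn : m = n := by
    have h1 := congrArg PowerSeries.order h
    rw [order_CX p hc' n, PowerSeries.order_mul, order_CX p hc m,
      PowerSeries.order_zero_of_unit hunit, add_zero] at h1
    exact_mod_cast h1.symm
  subst hmn
  refine ⟨?_, rfl⟩
  have h2 : PowerSeries.C c' * PowerSeries.X ^ m =
      (PowerSeries.C c * (1 + x)) * PowerSeries.X ^ m := by linear_combination h
  have h3 := mul_right_cancel₀ (pow_ne_zero m (PowerSeries.X_ne_zero :
    (PowerSeries.X : PowerSeries (ZMod p)) ≠ 0)) h2
  have := congrArg (constantCoeff) h3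
  simp [hx0] at this
  exact this.symm

lemma exists_unit_lift (c : ZMod p) (hc : c ≠ 0) :
    ∃ u : ℤ_[p]ˣ, PadicInt.toZMod (u : ℤ_[p]) = c := by
  haveI : NeZero p := ⟨(Fact.out : p.Prime).ne_zero⟩
  obtain ⟨n, rfl⟩ : ∃ n : ℕ, (n : ZMod p) = c := ⟨c.val, ZMod.natCast_rightInverse c⟩
  have hZ : PadicInt.toZMod ((n : ℤ_[p])) = (n : ZMod p) := map_natCast _ n
  have hu : IsUnit ((n : ℤ_[p])) := by
    by_contra hn
    have : (n : ℤ_[p]) ∈ maximalIdeal ℤ_[p] := hn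
    rw [mem_maxIdeal_zp_iff, hZ] at this
    exact hc this
  exact ⟨hu.unit, by rw [IsUnit.unit_spec, hZ]⟩

end PS

section Main

open PowerSeries PadicInt

variable (p : ℕ) [Fact p.Prime]

open scoped Classical in
/-- The underlying map `ℤ_[p] → MR(𝔽_p[[X]])`. -/
noncomputable def phi (a : ℤ_[p]) : MR (PowerSeries (ZMod p)) :=
  if h : a = 0 then mres 0
  else mres (PowerSeries.C (PadicInt.toZMod ((PadicInt.unitCoeff h : ℤ_[p]ˣ) : ℤ_[p])) *
    PowerSeries.X ^ a.valuation)

lemma phi_zero : phi p 0 = mres 0 := by rw [phi]; exact dif_pos rfl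

lemma phi_spec (u : ℤ_[p]ˣ) (m : ℕ) :
    phi p ((u : ℤ_[p]) * (p : ℤ_[p]) ^ m) =
      mres (PowerSeries.C (PadicInt.toZMod (u : ℤ_[p])) * PowerSeries.X ^ m) := by
  have ha : (u : ℤ_[p]) * (p : ℤ_[p]) ^ m ≠ 0 :=
    mul_ne_zero u.ne_zero (pow_ne_zero _ (p_ne_zero p))
  rw [phi, dif_neg ha]

  have hEq : mres ((PadicInt.unitCoeff ha : ℤ_[p]) *
      (p : ℤ_[p]) ^ ((u : ℤ_[p]) * (p : ℤ_[p]) ^ m).valuation) =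
      mres ((u : ℤ_[p]) * (p : ℤ_[p]) ^ m) := by
    rw [← PadicInt.unitCoeff_spec ha]
  obtain ⟨h1, h2⟩ := zp_char p _ _ _ _ hEq
  rw [h1, h2]

lemma phi_wd : ∀ a b : ℤ_[p], mrel ℤ_[p] a b → phi p a = phi p b := by
  intro a b h
  by_cases ha : a = 0
  · subst ha
    obtain ⟨x, hx, rfl⟩ := h
    rw [zero_mul, phi_zero]
  · have hb : b ≠ 0 := by
      obtain ⟨x, hx, rfl⟩ := h
      exact mul_ne_zero ha (isUnit_one_add' hx).ne_zero
    have hres : mres a = mres b := mres_eq_iff.mpr h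
    rw [PadicInt.unitCoeff_spec ha, PadicInt.unitCoeff_spec hb] at hres
    obtain ⟨h1, h2⟩ := zp_char p _ _ _ _ hres
    rw [phi, dif_neg ha, phi, dif_neg hb, h1, h2]

/-- The induced map `MR(ℤ_p) → MR(𝔽_p[[X]])`. -/
noncomputable def tau0 : MR ℤ_[p] → MR (PowerSeries (ZMod p)) :=
  Quot.lift (phi p) (phi_wd p)

lemma tau0_mres (a : ℤ_[p]) : tau0 p (mres a) = phi p a := rfl

lemma tau0_spec (u : ℤ_[p]ˣ) (m : ℕ) :
    tau0 p (mres ((u : ℤ_[p]) * (p : ℤ_[p]) ^ m)) =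
      mres (PowerSeries.C (PadicInt.toZMod (u : ℤ_[p])) * PowerSeries.X ^ m) :=
  phi_spec p u m

lemma tau0_zero : tau0 p (mres (0 : ℤ_[p])) = mres 0 := phi_zero p

lemma tau0_one : tau0 p 1 = 1 := by
  have h1 : (1 : MR ℤ_[p]) = mres (((1 : ℤ_[p]ˣ) : ℤ_[p]) * (p : ℤ_[p]) ^ 0) := by
    rw [mres_one]; norm_num
  rw [h1, tau0_spec]
  rw [mres_one (A := PowerSeries (ZMod p))]
  norm_num

lemma tau0_mul (x y : MR ℤ_[p]) : tau0 p (x * y) = tau0 p x * tau0 p y := by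
  obtain ⟨a, rfl⟩ := Quot.exists_rep x
  obtain ⟨b, rfl⟩ := Quot.exists_rep y
  show tau0 p (mres (a * b)) = tau0 p (mres a) * tau0 p (mres b)
  by_cases ha : a = 0
  · subst ha
    rw [zero_mul, tau0_zero]
    obtain ⟨f, hf⟩ := Quot.exists_rep (tau0 p (mres b))
    rw [← hf]
    show mres (0 : PowerSeries (ZMod p)) = mres ((0 : PowerSeries (ZMod p)) * f)
    rw [zero_mul]
  · by_cases hb : b = 0
    · subst hb
      rw [mul_zero, tau0_zero]
      obtain ⟨f, hf⟩ := Quot.exists_rep (tau0 p (mres a))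
      rw [← hf]
      show mres (0 : PowerSeries (ZMod p)) = mres (f * (0 : PowerSeries (ZMod p)))
      rw [mul_zero]
    · set ua := PadicInt.unitCoeff ha
      set ub := PadicInt.unitCoeff hb
      set ma := a.valuation
      set mb := b.valuation
      have hA : a = (ua : ℤ_[p]) * (p : ℤ_[p]) ^ ma := PadicInt.unitCoeff_spec ha
      have hB : b = (ub : ℤ_[p]) * (p : ℤ_[p]) ^ mb := PadicInt.unitCoeff_spec hb
      have hAB : a * b = ((ua * ub : ℤ_[p]ˣ) : ℤ_[p]) * (p : ℤ_[p]) ^ (ma + mb) := by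
        rw [hA, hB, Units.val_mul, pow_add]; ring
      rw [hAB, hA, hB, tau0_spec, tau0_spec, tau0_spec, mres_mul]
      congr 1
      rw [Units.val_mul, map_mul, map_mul, pow_add]
      ring

/-- `tau0` as a monoid hom. -/
noncomputable def tauHom : MR ℤ_[p] →* MR (PowerSeries (ZMod p)) :=
  { toFun := tau0 p
    map_one' := tau0_one p
    map_mul' := tau0_mul p }

lemma toZMod_unit_ne_zero (u : ℤ_[p]ˣ) : PadicInt.toZMod (u : ℤ_[p]) ≠ 0 :=
  (u.isUnit.map PadicInt.toZMod).ne_zero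

lemma tau_injective : Function.Injective (tau0 p) := by
  intro x y h
  obtain ⟨a, rfl⟩ := Quot.exists_rep x
  obtain ⟨b, rfl⟩ := Quot.exists_rep y
  have h' : tau0 p (mres a) = tau0 p (mres b) := h
  show mres a = mres b
  by_cases ha : a = 0
  · by_cases hb : b = 0
    · rw [ha, hb]
    · exfalso
      rw [ha, tau0_zero, PadicInt.unitCoeff_spec hb, tau0_spec] at h'
      exact CX_ne_zero p (toZMod_unit_ne_zero p _) _ (mres_eq_zero_iff.mp h'.symm)
  · by_cases hb : b = 0
    · exfalso
      rw [hb, tau0_zero, PadicInt.unitCoeff_spec ha, tau0_spec] at h'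
      exact CX_ne_zero p (toZMod_unit_ne_zero p _) _ (mres_eq_zero_iff.mp h')
    · rw [PadicInt.unitCoeff_spec ha, PadicInt.unitCoeff_spec hb, tau0_spec, tau0_spec] at h'
      obtain ⟨h1, h2⟩ := ps_char p (toZMod_unit_ne_zero p _) (toZMod_unit_ne_zero p _) _ _ h'
      rw [PadicInt.unitCoeff_spec ha, PadicInt.unitCoeff_spec hb, h2]
      exact zp_char_rev p _ _ _ h1

lemma tau_surjective : Function.Surjective (tau0 p) := by
  intro y
  obtain ⟨f, hf⟩ := Quot.exists_rep y
  by_cases hf0 : f = 0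
  · refine ⟨mres 0, ?_⟩
    rw [← hf, hf0]
    exact tau0_zero p
  · set c : ZMod p := ↑(PowerSeries.firstUnitCoeff hf0)
    have hc : c ≠ 0 := (PowerSeries.firstUnitCoeff hf0).ne_zero
    obtain ⟨u, hu⟩ := exists_unit_lift p c hc
    refine ⟨mres ((u : ℤ_[p]) * (p : ℤ_[p]) ^
      (f.order.lift (PowerSeries.order_finite_iff_ne_zero.mpr hf0))), ?_⟩
    rw [tau0_spec, hu, ← ps_classify p hf0]
    exact hf

end Main

section Thm

open PowerSeries PadicInt

variable (p : ℕ) [Fact p.Prime]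

lemma toZMod_p_eq_zero : PadicInt.toZMod ((p : ℤ_[p])) = 0 := by
  rw [← mem_maxIdeal_zp_iff, PadicInt.maximalIdeal_eq_span_p]
  exact Ideal.mem_span_singleton_self _

/-- The monoid isomorphism. -/
noncomputable def tauEquiv : MR ℤ_[p] ≃* MR (PowerSeries (ZMod p)) :=
  MulEquiv.ofBijective (tauHom p) ⟨tau_injective p, tau_surjective p⟩

lemma tauEquiv_apply (x : MR ℤ_[p]) : tauEquiv p x = tau0 p x := rfl

theorem padic_powerSeries_mulEquiv' (p : ℕ) [Fact p.Prime] :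
    ∃! τ : MR ℤ_[p] ≃* MR (PowerSeries (ZMod p)),
      (∀ (m : ℕ) (u : ℤ_[p]ˣ),
          τ (mres ((u : ℤ_[p]) * (p : ℤ_[p]) ^ m)) =
            mres (PowerSeries.C (PadicInt.toZMod (u : ℤ_[p])) * PowerSeries.X ^ m)) ∧
      ∀ (a : ℤ_[p]) (b : PowerSeries (ZMod p)), τ (mres a) = mres b →
        PowerSeries.constantCoeff b = PadicInt.toZMod a := by
  refine ⟨tauEquiv p, ⟨fun m u => ?_, fun a b hab => ?_⟩, fun τ' ⟨h1, _⟩ => ?_⟩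
  · rw [tauEquiv_apply, tau0_spec]
  · rw [tauEquiv_apply] at hab
    by_cases ha : a = 0
    · rw [ha, tau0_zero] at hab
      have hb : b = 0 := mres_eq_zero_iff.mp hab.symm
      rw [ha, hb, map_zero, map_zero]
    · rw [PadicInt.unitCoeff_spec ha, tau0_spec] at hab
      rw [mres_eq_iff] at hab
      obtain ⟨x, hx, rfl⟩ := hab
      have hx0 : constantCoeff x = 0 := (mem_maxIdeal_ps_iff p).mp hx
      have hta := congrArg PadicInt.toZMod (PadicInt.unitCoeff_spec ha)
      rw [map_mul, map_pow, toZMod_p_eq_zero] at hta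
      rw [map_mul, map_mul, map_pow, map_add, map_one, hx0, add_zero, mul_one,
        PowerSeries.constantCoeff_C, PowerSeries.constantCoeff_X, hta]
  · apply MulEquiv.ext
    intro x
    obtain ⟨a, rfl⟩ := Quot.exists_rep x
    show τ' (mres a) = tauEquiv p (mres a)
    by_cases ha : a = 0
    · rw [ha, tauEquiv_apply, tau0_zero]
      obtain ⟨f, hf⟩ := Quot.exists_rep (τ' (mres 0))
      by_cases hf0 : f = 0
      · rw [← hf, hf0]; rfl
      · exfalso
        set c : ZMod p := ↑(PowerSeries.firstUnitCoeff hf0) with hcdef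
        have hc : c ≠ 0 := (PowerSeries.firstUnitCoeff hf0).ne_zero
        obtain ⟨u, hu⟩ := exists_unit_lift p c hc
        set m := f.order.lift (PowerSeries.order_finite_iff_ne_zero.mpr hf0)
        have key : τ' (mres ((u : ℤ_[p]) * (p : ℤ_[p]) ^ m)) = τ' (mres 0) := by
          rw [h1 m u, hu, ← ps_classify p hf0]
          exact hf
        have := τ'.injective key
        have h0 : (u : ℤ_[p]) * (p : ℤ_[p]) ^ m = 0 := mres_eq_zero_iff.mp this
        exact mul_ne_zero u.ne_zero (pow_ne_zero _ (p_ne_zero p)) h0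
    · rw [PadicInt.unitCoeff_spec ha, h1, tauEquiv_apply, tau0_spec]

end Thm

/-- For every prime `p` there is a unique monoid isomorphism
`τ_p : MR(ℤ_p) ≃* MR(𝔽_p[[t]])` with `τ_p(mres (u·pᵐ)) = mres((u mod p)·tᵐ)` for every
`m ≥ 0` and unit `u` of `ℤ_p`; moreover `τ_p` is compatible with the natural maps to the
residue field `𝔽_p`. -/
theorem padic_powerSeries_mulEquiv (p : ℕ) [Fact p.Prime] :
    ∃! τ : MR ℤ_[p] ≃* MR (PowerSeries (ZMod p)),
      (∀ (m : ℕ) (u : ℤ_[p]ˣ),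
          τ (mres ((u : ℤ_[p]) * (p : ℤ_[p]) ^ m)) =
            mres (PowerSeries.C (PadicInt.toZMod (u : ℤ_[p])) * PowerSeries.X ^ m)) ∧
      ∀ (a : ℤ_[p]) (b : PowerSeries (ZMod p)), τ (mres a) = mres b →
        PowerSeries.constantCoeff b = PadicInt.toZMod a := by
  exact padic_powerSeries_mulEquiv' p
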